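/- For all x > 0, [ψ'(x)]² + ψ''(x) > p(x) / (900 x⁴ (x+1)¹⁰), where p(x) = 75x¹⁰ + 900x⁹ + 4840x⁸ + 15370x⁷ + 31865x⁶ + 45050x⁵ + 44101x⁴ + 29700x³ + 13290x² + 3600x + 450. -/

import Mathlib

noncomputable def trigamma (x : ℝ) : ℝ :=
  iteratedDeriv 2 (fun y => Real.log (Real.Gamma y)) x

noncomputable def tetragamma (x : ℝ) : ℝ :=
  iteratedDeriv 3 (fun y => Real.log (Real.Gamma y)) x

noncomputable def p (x : ℝ) : ℝ :=
  75*x^10 + 900*x^9 + 4840*x^8 + 15370*x^7 + 31865*x^6 + 45050*x^5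
    + 44101*x^4 + 29700*x^3 + 13290*x^2 + 3600*x + 450

open Real Filter Topology Set Finset

namespace PsiAux

/-- lower-bound auxiliary function for trigamma -/
noncomputable def phiA (y : ℝ) : ℝ :=
  y⁻¹ + (2*y^2)⁻¹ + (6*y^3)⁻¹ - (30*y^5)⁻¹ + (42*y^7)⁻¹ - (30*y^9)⁻¹

/-- upper-bound auxiliary function for -tetragamma -/
noncomputable def phiB (y : ℝ) : ℝ :=
  (y^2)⁻¹ + (y^3)⁻¹ + (2*y^4)⁻¹ - (6*y^6)⁻¹ + (6*y^8)⁻¹ - 3/10*(y^10)⁻¹ + 5/6*(y^12)⁻¹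

noncomputable def Strig (x : ℝ) : ℝ := ∑' n : ℕ, ((x + (n:ℝ)) ^ 2)⁻¹

noncomputable def Ttet (x : ℝ) : ℝ := ∑' n : ℕ, -(2 * ((x + (n:ℝ)) ^ 3)⁻¹)

lemma summable_base : Summable (fun n : ℕ => (((n:ℝ) + 1) ^ 2)⁻¹) := by
  have h := (summable_nat_add_iff (f := fun n : ℕ => ((n:ℝ) ^ 2)⁻¹) 1).mpr
    (Real.summable_nat_pow_inv.mpr one_lt_two)
  convert h using 2 with n
  · rfl
  push_cast
  ring

lemma summable_aux {x : ℝ} (hx : 0 < x) {k : ℕ} (hk : 2 ≤ k) :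
    Summable (fun n : ℕ => ((x + (n:ℝ)) ^ k)⁻¹) := by
  set c : ℝ := min x 1 / 2 with hc
  have hc0 : 0 < c := by positivity
  have hc1 : c ≤ 1 / 2 := by
    rw [hc]
    have : min x 1 ≤ 1 := min_le_right _ _
    linarith
  refine Summable.of_nonneg_of_le (fun n => by positivity)
    (fun n => ?_) ((summable_base).mul_left ((c ^ k)⁻¹))
  have h1 : c * ((n:ℝ) + 1) ≤ x + n := by
    rcases n with _ | m
    · have : min x 1 ≤ x := min_le_left _ _
      simp only [Nat.cast_zero, add_zero]
      rw [hc]; linarith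
    · have hm : (1:ℝ) ≤ (m:ℝ) + 1 := by
        have := Nat.cast_nonneg (α := ℝ) m
        linarith
      have : c * ((m:ℝ) + 1 + 1) ≤ ((m:ℝ) + 1 + 1) / 2 := by
        have h2 : (0:ℝ) ≤ (m:ℝ) + 1 + 1 := by positivity
        nlinarith
      push_cast
      nlinarith
  have h2 : c ^ k * ((n:ℝ) + 1) ^ 2 ≤ (x + n) ^ k := by
    calc c ^ k * ((n:ℝ) + 1) ^ 2 ≤ c ^ k * ((n:ℝ) + 1) ^ k := by
          have h1n : (1:ℝ) ≤ (n:ℝ) + 1 := by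
            have := Nat.cast_nonneg (α := ℝ) n
            linarith
          exact mul_le_mul_of_nonneg_left (pow_le_pow_right₀ h1n hk) (by positivity)
      _ = (c * ((n:ℝ) + 1)) ^ k := (mul_pow _ _ _).symm
      _ ≤ (x + n) ^ k := by
          apply pow_le_pow_left₀ (by positivity) h1
  rw [← mul_inv]
  exact inv_anti₀ (by positivity) h2

lemma term_nonneg {y : ℝ} (hy : 0 ≤ y) (n : ℕ) :
    0 ≤ y / ((n:ℝ)+1) - Real.log (1 + y / ((n:ℝ)+1)) := by
  set t : ℝ := y / ((n:ℝ)+1) with htdef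
  have ht : 0 ≤ t := by positivity
  have h1t : (0:ℝ) < 1 + t := by linarith
  have := Real.log_le_sub_one_of_pos h1t
  linarith

lemma term_le {y : ℝ} (hy : 0 ≤ y) (n : ℕ) :
    y / ((n:ℝ)+1) - Real.log (1 + y / ((n:ℝ)+1)) ≤ y^2 * (((n:ℝ)+1)^2)⁻¹ := by
  set t : ℝ := y / ((n:ℝ)+1) with htdef
  have ht : 0 ≤ t := by positivity
  have h1t : (0:ℝ) < 1 + t := by linarith
  have hlog : -Real.log (1 + t) ≤ (1+t)⁻¹ - 1 := by
    have := Real.log_le_sub_one_of_pos (show (0:ℝ) < (1+t)⁻¹ by positivity)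
    rwa [Real.log_inv] at this
  have hinv : (1+t) * (1+t)⁻¹ = 1 := mul_inv_cancel₀ (ne_of_gt h1t)
  have hinvpos : (0:ℝ) ≤ (1+t)⁻¹ := by positivity
  have key : t - Real.log (1 + t) ≤ t^2 := by nlinarith
  have ht2 : t^2 ≤ y^2 * (((n:ℝ)+1)^2)⁻¹ := by
    rw [htdef, div_pow, div_eq_mul_inv]
  linarith

lemma summable_terms {y : ℝ} (hy : 0 ≤ y) :
    Summable (fun n : ℕ => y / ((n:ℝ)+1) - Real.log (1 + y / ((n:ℝ)+1))) :=
  Summable.of_nonneg_of_le (term_nonneg hy) (term_le hy) (summable_base.mul_left (y^2))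

lemma harmonic_cast (N : ℕ) :
    ((harmonic N : ℚ) : ℝ) = ∑ i ∈ Finset.range N, (((i:ℝ))+1)⁻¹ := by
  rw [harmonic]
  push_cast
  rfl

lemma log_factorial (N : ℕ) :
    Real.log (Nat.factorial N : ℝ) = ∑ n ∈ Finset.range N, Real.log ((n:ℝ)+1) := by
  induction N with
  | zero => simp
  | succ m ih =>
    rw [Finset.sum_range_succ, ← ih, Nat.factorial_succ]
    push_cast
    rw [Real.log_mul (by positivity) (by positivity)]
    ring

lemma partial_sum_eq {x : ℝ} (hx : 0 < x) (N : ℕ) :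
    ∑ n ∈ Finset.range N, (x / ((n:ℝ)+1) - Real.log (1 + x / ((n:ℝ)+1)))
      = x * (((harmonic N : ℚ) : ℝ) - Real.log N)
        + Real.BohrMollerup.logGammaSeq x N + Real.log x := by
  have hterm : ∀ n : ℕ, Real.log (1 + x / ((n:ℝ)+1))
      = Real.log (x + (n:ℝ) + 1) - Real.log ((n:ℝ)+1) := by
    intro n
    have h1 : (0:ℝ) < (n:ℝ)+1 := by positivity
    rw [← Real.log_div (by positivity) (ne_of_gt h1)]
    congr 1
    field_simp
    ring
  have hshift : ∑ m ∈ Finset.range (N+1), Real.log (x + (m:ℝ))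
      = Real.log x + ∑ n ∈ Finset.range N, Real.log (x + (n:ℝ) + 1) := by
    rw [Finset.sum_range_succ']
    simp only [Nat.cast_zero, add_zero, Nat.cast_add, Nat.cast_one]
    rw [add_comm]
    congr 1
    apply Finset.sum_congr rfl
    intro i _
    ring_nf
  have hs1 : ∑ n ∈ Finset.range N, x / ((n:ℝ)+1)
      = x * ∑ i ∈ Finset.range N, (((i:ℝ))+1)⁻¹ := by
    rw [Finset.mul_sum]
    exact Finset.sum_congr rfl (fun i _ => div_eq_mul_inv x _)
  rw [Real.BohrMollerup.logGammaSeq]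
  simp only [hterm, Finset.sum_sub_distrib]
  rw [harmonic_cast, log_factorial, hshift, hs1]
  ring

lemma hasSum_weier {x : ℝ} (hx : 0 < x) :
    HasSum (fun n : ℕ => x / ((n:ℝ)+1) - Real.log (1 + x / ((n:ℝ)+1)))
      (Real.log (Real.Gamma x) + Real.log x + Real.eulerMascheroniConstant * x) := by
  have hsum := summable_terms hx.le
  rw [hsum.hasSum_iff_tendsto_nat]
  have h1 : Tendsto (fun N : ℕ => x * (((harmonic N : ℚ) : ℝ) - Real.log N)
      + Real.BohrMollerup.logGammaSeq x N + Real.log x) atTop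
      (𝓝 (x * Real.eulerMascheroniConstant + Real.log (Real.Gamma x) + Real.log x)) := by
    exact ((Real.tendsto_harmonic_sub_log.const_mul x).add
      (Real.BohrMollerup.tendsto_log_gamma hx)).add tendsto_const_nhds
  have h2 : (fun N : ℕ => ∑ n ∈ Finset.range N,
      (x / ((n:ℝ)+1) - Real.log (1 + x / ((n:ℝ)+1)))) = fun N =>
      x * (((harmonic N : ℚ) : ℝ) - Real.log N)
        + Real.BohrMollerup.logGammaSeq x N + Real.log x := by
    funext N; exact partial_sum_eq hx N
  rw [h2]
  convert h1 using 2
  ring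

lemma logGamma_eq {x : ℝ} (hx : 0 < x) :
    Real.log (Real.Gamma x) = -Real.log x - Real.eulerMascheroniConstant * x
      + ∑' n : ℕ, (x / ((n:ℝ)+1) - Real.log (1 + x / ((n:ℝ)+1))) := by
  have := (hasSum_weier hx).tsum_eq
  rw [this]
  ring

noncomputable def psi (y : ℝ) : ℝ :=
  -y⁻¹ - Real.eulerMascheroniConstant + ∑' n : ℕ, ((((n:ℝ))+1)⁻¹ - (y + (n:ℝ) + 1)⁻¹)

lemma psi_term_eq {y : ℝ} (hy : 0 < y) (n : ℕ) :
    (((n:ℝ))+1)⁻¹ - (y + (n:ℝ) + 1)⁻¹ = y / ((((n:ℝ))+1) * (y + (n:ℝ) + 1)) := by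
  have ha : (0:ℝ) < (n:ℝ)+1 := by positivity
  have hb : (0:ℝ) < y + (n:ℝ) + 1 := by positivity
  field_simp
  ring

lemma psi_term_bound {y c : ℝ} (hy : 0 < y) (hyc : y ≤ c) (n : ℕ) :
    (((n:ℝ))+1)⁻¹ - (y + (n:ℝ) + 1)⁻¹ ≤ c * ((((n:ℝ))+1)^2)⁻¹ := by
  have ha : (0:ℝ) < (n:ℝ)+1 := by positivity
  have hb : (0:ℝ) < y + (n:ℝ) + 1 := by positivity
  rw [psi_term_eq hy, ← div_eq_mul_inv]
  apply div_le_div₀ (by linarith) hyc (by positivity)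
  nlinarith

lemma psi_term_nonneg {y : ℝ} (hy : 0 < y) (n : ℕ) :
    0 ≤ (((n:ℝ))+1)⁻¹ - (y + (n:ℝ) + 1)⁻¹ := by
  have ha : (0:ℝ) < (n:ℝ)+1 := by positivity
  have hb : (0:ℝ) < y + (n:ℝ) + 1 := by positivity
  rw [psi_term_eq hy]
  positivity

lemma summable_psi_terms {y : ℝ} (hy : 0 < y) :
    Summable (fun n : ℕ => (((n:ℝ))+1)⁻¹ - (y + (n:ℝ) + 1)⁻¹) :=
  Summable.of_nonneg_of_le (psi_term_nonneg hy) (psi_term_bound hy le_rfl)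
    (summable_base.mul_left y)

lemma hasDerivAt_G {x : ℝ} (hx : 0 < x) :
    HasDerivAt (fun y : ℝ => ∑' n : ℕ, (y / ((n:ℝ)+1) - Real.log (1 + y / ((n:ℝ)+1))))
      (∑' n : ℕ, ((((n:ℝ))+1)⁻¹ - (x + (n:ℝ) + 1)⁻¹)) x := by
  refine hasDerivAt_tsum_of_isPreconnected
    (g := fun (n : ℕ) (y : ℝ) => y / ((n:ℝ)+1) - Real.log (1 + y / ((n:ℝ)+1)))
    (g' := fun (n : ℕ) (y : ℝ) => (((n:ℝ))+1)⁻¹ - (y + (n:ℝ) + 1)⁻¹)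
    (u := fun n : ℕ => (x+1) * (((n:ℝ)+1)^2)⁻¹) (t := Ioo 0 (x+1)) (y₀ := x)
    (summable_base.mul_left _) isOpen_Ioo isPreconnected_Ioo ?_ ?_
    ⟨hx, by linarith⟩ (summable_terms hx.le) ⟨hx, by linarith⟩
  · intro n y hy
    have hy0 : 0 < y := hy.1
    have ha : (0:ℝ) < (n:ℝ)+1 := by positivity
    have hpos : 0 < 1 + y / ((n:ℝ)+1) := by positivity
    have h1 : HasDerivAt (fun z : ℝ => z / ((n:ℝ)+1)) (((n:ℝ)+1)⁻¹) y := by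
      simpa using (hasDerivAt_id y).div_const ((n:ℝ)+1)
    have h2 : HasDerivAt (fun z : ℝ => 1 + z / ((n:ℝ)+1)) (((n:ℝ)+1)⁻¹) y := h1.const_add 1
    have h3 := h2.log (ne_of_gt hpos)
    convert h1.sub h3 using 1
    · rfl
    have hb : (0:ℝ) < y + (n:ℝ) + 1 := by positivity
    have h4 : (((n:ℝ))+1)⁻¹ / (1 + y/((n:ℝ)+1)) = (y + (n:ℝ) + 1)⁻¹ := by
      rw [div_eq_iff (ne_of_gt hpos), inv_eq_one_div, inv_eq_one_div]
      field_simp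
      ring
    rw [h4]
  · intro n y hy
    rw [Real.norm_eq_abs, abs_of_nonneg (psi_term_nonneg hy.1 n)]
    exact psi_term_bound hy.1 hy.2.le n

lemma hasDerivAt_logGamma {x : ℝ} (hx : 0 < x) :
    HasDerivAt (fun y => Real.log (Real.Gamma y)) (psi x) x := by
  have heq : (fun y => Real.log (Real.Gamma y)) =ᶠ[𝓝 x]
      (fun y => -Real.log y - Real.eulerMascheroniConstant * y
        + ∑' n : ℕ, (y / ((n:ℝ)+1) - Real.log (1 + y / ((n:ℝ)+1)))) := by
    filter_upwards [Ioi_mem_nhds hx] with y hy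
    exact logGamma_eq hy
  have h1 : HasDerivAt (fun y : ℝ => -Real.log y - Real.eulerMascheroniConstant * y)
      (-x⁻¹ - Real.eulerMascheroniConstant) x := by
    have hl := (Real.hasDerivAt_log (ne_of_gt hx)).neg
    have hm : HasDerivAt (fun y : ℝ => Real.eulerMascheroniConstant * y)
        Real.eulerMascheroniConstant x := by
      simpa using (hasDerivAt_id x).const_mul Real.eulerMascheroniConstant
    exact hl.sub hm
  have htot := h1.add (hasDerivAt_G hx)
  exact htot.congr_of_eventuallyEq heq

lemma Strig_eq_shift {x : ℝ} (hx : 0 < x) :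
    Strig x = (x^2)⁻¹ + ∑' n : ℕ, ((x + (n:ℝ) + 1)^2)⁻¹ := by
  rw [Strig, Summable.tsum_eq_zero_add (summable_aux hx (le_refl 2))]
  congr 1
  · norm_num
  · apply tsum_congr
    intro n
    push_cast
    ring_nf

lemma hasDerivAt_psi {x : ℝ} (hx : 0 < x) : HasDerivAt psi (Strig x) x := by
  have key : HasDerivAt (fun y : ℝ => ∑' n : ℕ, ((((n:ℝ))+1)⁻¹ - (y + (n:ℝ) + 1)⁻¹))
      (∑' n : ℕ, ((x + (n:ℝ) + 1)^2)⁻¹) x := by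
    refine hasDerivAt_tsum_of_isPreconnected
      (g := fun (n : ℕ) (y : ℝ) => (((n:ℝ))+1)⁻¹ - (y + (n:ℝ) + 1)⁻¹)
      (g' := fun (n : ℕ) (y : ℝ) => ((y + (n:ℝ) + 1)^2)⁻¹)
      (u := fun n : ℕ => (((x/2+1) + (n:ℝ))^2)⁻¹) (t := Ioi (x/2)) (y₀ := x)
      (summable_aux (by positivity) (le_refl 2)) isOpen_Ioi isPreconnected_Ioi ?_ ?_
      (Set.mem_Ioi.mpr (half_lt_self hx)) (summable_psi_terms hx)
      (Set.mem_Ioi.mpr (half_lt_self hx))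
    · intro n y hy
      have hy0 : 0 < y := lt_trans (half_pos hx) hy
      have hpos : (0:ℝ) < y + (n:ℝ) + 1 := by positivity
      have h1 : HasDerivAt (fun z : ℝ => z + (n:ℝ) + 1) 1 y := by
        simpa using ((hasDerivAt_id y).add_const ((n:ℝ))).add_const (1:ℝ)
      have h2 := h1.inv (ne_of_gt hpos)
      have h3 := h2.const_sub ((((n:ℝ))+1)⁻¹)
      convert h3 using 1
      · rfl
      field_simp
    · intro n y hy
      have hy2 : x/2 < y := hy
      have hpos : (0:ℝ) < y + (n:ℝ) + 1 := by
        have := Nat.cast_nonneg (α := ℝ) n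
        linarith [half_pos hx]
      have hpos2 : (0:ℝ) < x/2 + 1 + (n:ℝ) := by positivity
      rw [Real.norm_eq_abs, abs_of_pos (inv_pos.mpr (pow_pos hpos 2))]
      apply inv_anti₀ (pow_pos hpos2 2)
      apply pow_le_pow_left₀ hpos2.le
      linarith
  have h0 : HasDerivAt (fun y : ℝ => -y⁻¹ - Real.eulerMascheroniConstant) ((x^2)⁻¹) x := by
    have h := (hasDerivAt_inv (ne_of_gt hx)).neg
    simpa using h.sub_const Real.eulerMascheroniConstant
  have htot := h0.add key
  rw [Strig_eq_shift hx]
  exact htot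

lemma hasDerivAt_Strig {x : ℝ} (hx : 0 < x) : HasDerivAt Strig (Ttet x) x := by
  have key : HasDerivAt (fun y : ℝ => ∑' n : ℕ, ((y + (n:ℝ))^2)⁻¹)
      (∑' n : ℕ, -(2 * ((x + (n:ℝ))^3)⁻¹)) x := by
    refine hasDerivAt_tsum_of_isPreconnected
      (g := fun (n : ℕ) (y : ℝ) => ((y + (n:ℝ))^2)⁻¹)
      (g' := fun (n : ℕ) (y : ℝ) => -(2 * ((y + (n:ℝ))^3)⁻¹))
      (u := fun n : ℕ => 2 * (((x/2) + (n:ℝ))^3)⁻¹) (t := Ioi (x/2)) (y₀ := x)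
      ((summable_aux (half_pos hx) (by norm_num)).mul_left 2) isOpen_Ioi isPreconnected_Ioi ?_ ?_
      (Set.mem_Ioi.mpr (half_lt_self hx)) (summable_aux hx (le_refl 2))
      (Set.mem_Ioi.mpr (half_lt_self hx))
    · intro n y hy
      have hy0 : 0 < y := lt_trans (half_pos hx) hy
      have hpos : (0:ℝ) < y + (n:ℝ) := by positivity
      have h1 : HasDerivAt (fun z : ℝ => z + (n:ℝ)) 1 y := (hasDerivAt_id y).add_const _
      have h2 : HasDerivAt (fun z : ℝ => (z + (n:ℝ))^2) (2*(y+(n:ℝ))) y := by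
        have h := h1.pow 2
        simp at h
        exact h
      have h3 := h2.inv (pow_ne_zero 2 (ne_of_gt hpos))
      convert h3 using 1
      · rfl
      · rfl
      field_simp
    · intro n y hy
      have hy2 : x/2 < y := hy
      have hpos : (0:ℝ) < y + (n:ℝ) := by
        have := Nat.cast_nonneg (α := ℝ) n
        linarith [half_pos hx]
      have hpos2 : (0:ℝ) < x/2 + (n:ℝ) := by positivity
      rw [Real.norm_eq_abs, abs_neg, abs_of_pos (by positivity)]
      have h5 : ((y + (n:ℝ))^3)⁻¹ ≤ (((x/2) + (n:ℝ))^3)⁻¹ := by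
        apply inv_anti₀ (pow_pos hpos2 3)
        apply pow_le_pow_left₀ hpos2.le
        linarith
      linarith
  exact key

lemma trigamma_eq {x : ℝ} (hx : 0 < x) : trigamma x = Strig x := by
  have h2 : (2:ℕ) = 1 + 1 := rfl
  rw [trigamma, h2, iteratedDeriv_succ, iteratedDeriv_one]
  have h1 : deriv (fun y => Real.log (Real.Gamma y)) =ᶠ[𝓝 x] psi := by
    filter_upwards [Ioi_mem_nhds hx] with y hy
    exact (hasDerivAt_logGamma hy).deriv
  rw [h1.deriv_eq]
  exact (hasDerivAt_psi hx).deriv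

lemma tetragamma_eq {x : ℝ} (hx : 0 < x) : tetragamma x = Ttet x := by
  have h3 : (3:ℕ) = 2 + 1 := rfl
  rw [tetragamma, h3, iteratedDeriv_succ]
  have h1 : iteratedDeriv 2 (fun y => Real.log (Real.Gamma y)) =ᶠ[𝓝 x] Strig := by
    filter_upwards [Ioi_mem_nhds hx] with y hy
    exact trigamma_eq hy
  rw [h1.deriv_eq]
  exact (hasDerivAt_Strig hx).deriv

lemma P1_step {t : ℝ} (ht : 0 < t) : phiA t - phiA (t+1) < (t^2)⁻¹ := by
  have h1 : (t^2)⁻¹ - (phiA t - phiA (t+1)) =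
      (175*t^6+525*t^5+709*t^4+543*t^3+247*t^2+63*t+7)/(210*t^9*(t+1)^9) := by
    have ht1 : (0:ℝ) < t + 1 := by linarith
    unfold phiA
    field_simp
    ring
  have h2 : (0:ℝ) < (175*t^6+525*t^5+709*t^4+543*t^3+247*t^2+63*t+7)/(210*t^9*(t+1)^9) := by
    have ht1 : (0:ℝ) < t + 1 := by linarith
    positivity
  linarith

lemma P2_step {t : ℝ} (ht : 0 < t) : 2*(t^3)⁻¹ ≤ phiB t - phiB (t+1) := by
  have h1 : (phiB t - phiB (t+1)) - 2*(t^3)⁻¹ =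
      (1382*t^9+6219*t^8+13712*t^7+18970*t^6+17880*t^5+11786*t^4+5392*t^3+1641*t^2+300*t+25)
        /(30*t^12*(t+1)^12) := by
    have ht1 : (0:ℝ) < t + 1 := by linarith
    unfold phiB
    field_simp
    ring
  have h2 : (0:ℝ) ≤
      (1382*t^9+6219*t^8+13712*t^7+18970*t^6+17880*t^5+11786*t^4+5392*t^3+1641*t^2+300*t+25)
        /(30*t^12*(t+1)^12) := by
    have ht1 : (0:ℝ) < t + 1 := by linarith
    positivity
  linarith

lemma aux_tendsto (c : ℝ) (hc : 0 < c) (k : ℕ) (hk : k ≠ 0) :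
    Tendsto (fun y : ℝ => (c * y^k)⁻¹) atTop (𝓝 0) :=
  Tendsto.inv_tendsto_atTop ((tendsto_pow_atTop hk).const_mul_atTop hc)

lemma tendsto_ofnat (x : ℝ) : Tendsto (fun N : ℕ => x + (N:ℝ)) atTop atTop :=
  tendsto_atTop_add_const_left _ x tendsto_natCast_atTop_atTop

lemma tendsto_phiA (x : ℝ) : Tendsto (fun N : ℕ => phiA (x + (N:ℝ))) atTop (𝓝 0) := by
  have h : Tendsto phiA atTop (𝓝 0) := by
    have h0 : Tendsto (fun y : ℝ => y⁻¹) atTop (𝓝 0) := tendsto_inv_atTop_zero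
    have := ((((h0.add (aux_tendsto 2 (by norm_num) 2 (by norm_num))).add
      (aux_tendsto 6 (by norm_num) 3 (by norm_num))).sub
      (aux_tendsto 30 (by norm_num) 5 (by norm_num))).add
      (aux_tendsto 42 (by norm_num) 7 (by norm_num))).sub
      (aux_tendsto 30 (by norm_num) 9 (by norm_num))
    unfold phiA
    simpa only [one_mul, mul_zero, add_zero, sub_zero, zero_add] using this
  exact h.comp (tendsto_ofnat x)

lemma tendsto_phiB (x : ℝ) : Tendsto (fun N : ℕ => phiB (x + (N:ℝ))) atTop (𝓝 0) := by
  have h : Tendsto phiB atTop (𝓝 0) := by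
    have h2 := aux_tendsto 1 one_pos 2 (by norm_num)
    have h3 := aux_tendsto 1 one_pos 3 (by norm_num)
    have h4 := aux_tendsto 2 (by norm_num) 4 (by norm_num)
    have h6 := aux_tendsto 6 (by norm_num) 6 (by norm_num)
    have h8 := aux_tendsto 6 (by norm_num) 8 (by norm_num)
    have h10 := (aux_tendsto 1 one_pos 10 (by norm_num)).const_mul (3/10 : ℝ)
    have h12 := (aux_tendsto 1 one_pos 12 (by norm_num)).const_mul (5/6 : ℝ)
    have := (((((h2.add h3).add h4).sub h6).add h8).sub h10).add h12
    unfold phiB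
    simpa only [one_mul, mul_zero, add_zero, sub_zero, zero_add] using this
  exact h.comp (tendsto_ofnat x)

lemma Strig_gt_phiA {x : ℝ} (hx : 0 < x) : phiA x < Strig x := by
  have hsum := (summable_aux hx (le_refl 2)).hasSum
  have htend := hsum.tendsto_sum_nat
  set D : ℕ → ℝ :=
    fun N => (∑ n ∈ Finset.range N, ((x + (n:ℝ))^2)⁻¹) - (phiA x - phiA (x + (N:ℝ))) with hD
  have hstep : ∀ N : ℕ, D N ≤ D (N+1) := by
    intro N
    have hxN : (0:ℝ) < x + (N:ℝ) := by positivity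
    have h1 := P1_step hxN
    have hcast : phiA (x + ((N:ℝ)+1)) = phiA (x + (N:ℝ) + 1) := by ring_nf
    simp only [hD, Finset.sum_range_succ]
    push_cast
    rw [hcast]
    linarith
  have hmono : Monotone D := monotone_nat_of_le_succ hstep
  have hDlim : Tendsto D atTop (𝓝 (Strig x - (phiA x - 0))) :=
    htend.sub (tendsto_const_nhds.sub (tendsto_phiA x))
  have hD1 : D 1 ≤ Strig x - (phiA x - 0) := by
    apply ge_of_tendsto hDlim
    filter_upwards [eventually_ge_atTop 1] with N hN
    exact hmono hN
  have hD1pos : 0 < D 1 := by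
    have h1 := P1_step hx
    have : D 1 = ((x + ((0:ℕ):ℝ))^2)⁻¹ - (phiA x - phiA (x + ((1:ℕ):ℝ))) := by
      simp [hD, Finset.sum_range_one]
    rw [this]
    norm_num
    linarith
  linarith

lemma tsum_cube_le {x : ℝ} (hx : 0 < x) :
    ∑' n : ℕ, 2 * ((x + (n:ℝ))^3)⁻¹ ≤ phiB x := by
  have hsum3 : Summable (fun n : ℕ => ((x + (n:ℝ))^3)⁻¹) := summable_aux hx (by norm_num)
  have hsum := (hsum3.mul_left 2).hasSum
  have htend := hsum.tendsto_sum_nat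
  set E : ℕ → ℝ :=
    fun N => (phiB x - phiB (x + (N:ℝ))) - ∑ n ∈ Finset.range N, 2 * ((x + (n:ℝ))^3)⁻¹ with hE
  have hstep : ∀ N : ℕ, E N ≤ E (N+1) := by
    intro N
    have hxN : (0:ℝ) < x + (N:ℝ) := by positivity
    have h1 := P2_step hxN
    have hcast : phiB (x + ((N:ℝ)+1)) = phiB (x + (N:ℝ) + 1) := by ring_nf
    simp only [hE, Finset.sum_range_succ]
    push_cast
    rw [hcast]
    linarith
  have hmono : Monotone E := monotone_nat_of_le_succ hstep
  have hElim : Tendsto E atTop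
      (𝓝 ((phiB x - 0) - ∑' n : ℕ, 2 * ((x + (n:ℝ))^3)⁻¹)) :=
    (tendsto_const_nhds.sub (tendsto_phiB x)).sub htend
  have hE0 : E 0 ≤ (phiB x - 0) - ∑' n : ℕ, 2 * ((x + (n:ℝ))^3)⁻¹ := by
    apply ge_of_tendsto hElim
    filter_upwards [eventually_ge_atTop 0] with N hN
    exact hmono hN
  have hz : E 0 = 0 := by simp [hE]
  rw [hz] at hE0
  set Sv := ∑' n : ℕ, 2 * ((x + (n:ℝ))^3)⁻¹ with hSv
  linarith

lemma Ttet_ge {x : ℝ} (hx : 0 < x) : -phiB x ≤ Ttet x := by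
  have hsum3 : Summable (fun n : ℕ => ((x + (n:ℝ))^3)⁻¹) := summable_aux hx (by norm_num)
  have h1 : Ttet x = -∑' n : ℕ, 2 * ((x + (n:ℝ))^3)⁻¹ := by
    rw [Ttet, tsum_neg]
  rw [h1]
  have := tsum_cube_le hx
  linarith

lemma Strig_shift {x : ℝ} (hx : 0 < x) : Strig x = (x^2)⁻¹ + Strig (x+1) := by
  rw [Strig_eq_shift hx]
  congr 1
  rw [Strig]
  apply tsum_congr
  intro n
  ring_nf

lemma Ttet_shift {x : ℝ} (hx : 0 < x) : Ttet x = -(2*(x^3)⁻¹) + Ttet (x+1) := by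
  rw [Ttet, Summable.tsum_eq_zero_add]
  · congr 1
    · norm_num
    · rw [Ttet]
      apply tsum_congr
      intro n
      push_cast
      ring_nf
  · have hsum3 : Summable (fun n : ℕ => ((x + (n:ℝ))^3)⁻¹) := summable_aux hx (by norm_num)
    exact (hsum3.mul_left 2).neg

lemma phiA_nonneg {x : ℝ} (hx : 0 < x) : 0 ≤ phiA (x+1) := by
  have h1 : phiA (x+1) =
      (210*x^8+1785*x^7+6650*x^6+14175*x^5+18893*x^4+16107*x^3+8573*x^2+2607*x+341)
        /(210*(x+1)^9) := by
    have hx1 : (0:ℝ) < x + 1 := by linarith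
    unfold phiA
    field_simp
    ring
  rw [h1]
  positivity

lemma final_poly {x : ℝ} (hx : 0 < x) :
    ((x^2)⁻¹ + phiA (x+1))^2 - 2*(x^3)⁻¹ - phiB (x+1) - p x / (900 * x^4 * (x+1)^10)
      = (7350*x^16+132300*x^15+1119300*x^14+5889450*x^13+21504140*x^12+57595510*x^11
        +116707710*x^10+182135170*x^9+221092463*x^8+209581542*x^7+154821628*x^6
        +88284212*x^5+38109222*x^4+12035940*x^3+2623110*x^2+352800*x+22050)
        /(44100*x^4*(x+1)^18) := by
  have hx1 : (0:ℝ) < x + 1 := by linarith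
  unfold phiA phiB p
  field_simp
  ring

end PsiAux

theorem stmt0 : ∀ x : ℝ, 0 < x →
    (trigamma x)^2 + tetragamma x > p x / (900 * x^4 * (x+1)^10) := by
  intro x hx
  have hx1 : (0:ℝ) < x + 1 := by linarith
  rw [PsiAux.trigamma_eq hx, PsiAux.tetragamma_eq hx]
  have hS1 : PsiAux.phiA (x+1) < PsiAux.Strig (x+1) := PsiAux.Strig_gt_phiA hx1
  have hphiA : 0 ≤ PsiAux.phiA (x+1) := PsiAux.phiA_nonneg hx
  have hB : (0:ℝ) ≤ (x^2)⁻¹ + PsiAux.phiA (x+1) := by positivity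
  have hSx : (x^2)⁻¹ + PsiAux.phiA (x+1) < PsiAux.Strig x := by
    rw [PsiAux.Strig_shift hx]
    linarith
  have hsq : ((x^2)⁻¹ + PsiAux.phiA (x+1))^2 < (PsiAux.Strig x)^2 :=
    pow_lt_pow_left₀ hSx hB (by norm_num)
  have hT : -(2*(x^3)⁻¹) - PsiAux.phiB (x+1) ≤ PsiAux.Ttet x := by
    rw [PsiAux.Ttet_shift hx]
    have := PsiAux.Ttet_ge hx1
    linarith
  have hkey := PsiAux.final_poly hx
  have hQ : (0:ℝ) ≤ (7350*x^16+132300*x^15+1119300*x^14+5889450*x^13+21504140*x^12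
        +57595510*x^11+116707710*x^10+182135170*x^9+221092463*x^8+209581542*x^7
        +154821628*x^6+88284212*x^5+38109222*x^4+12035940*x^3+2623110*x^2+352800*x+22050)
        /(44100*x^4*(x+1)^18) := by positivity
  linarith
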